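/- Let R be a commutative ring and p : E → B a chain map of chain complexes of R-modules. For n ∈ ℤ let Q_n = {(b, z) ∈ B_n × Z_{n−1}(E) : d(b) = p(z)} be the pullback of d : B_n → Z_{n−1}(B) and p : Z_{n−1}(E) → Z_{n−1}(B). Then there exist R-linear maps η_n : Q_n → E_n with p(η_n(b,z)) = b and d(η_n(b,z)) = z for all (b,z) ∈ Q_n and all n, if and only if p is a degreewise split epimorphism and a homotopy equivalence. -/

import Mathlib

open CategoryTheory

variable (R : Type) [CommRing R]

/-- Concrete chain homotopy from `u` to `v`: `d ∘ sₙ + sₙ₋₁ ∘ d = uₙ - vₙ`. -/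
def IsHomotopy {X Y : ChainComplex (ModuleCat R) ℤ} (u v : X ⟶ Y)
    (s : ∀ n : ℤ, X.X n ⟶ Y.X (n + 1)) : Prop :=
  ∀ n : ℤ, s n ≫ Y.d (n + 1) n +
      X.d n (n - 1) ≫ s (n - 1) ≫ eqToHom (congrArg Y.X (show n - 1 + 1 = n by omega)) =
    u.f n - v.f n

/-- Two chain maps are chain homotopic. -/
def Homotopic {X Y : ChainComplex (ModuleCat R) ℤ} (u v : X ⟶ Y) : Prop :=
  ∃ s, IsHomotopy R u v s

/-- A chain map is a homotopy equivalence: it admits an inverse up to chain homotopy. -/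
def IsHtpyEquiv {X Y : ChainComplex (ModuleCat R) ℤ} (f : X ⟶ Y) : Prop :=
  ∃ g : Y ⟶ X, Homotopic R (f ≫ g) (𝟙 X) ∧ Homotopic R (g ≫ f) (𝟙 Y)

/-- Degreewise split monomorphism: each `iₙ` admits an `R`-linear retraction. -/
def DegSplitMono {W Y : ChainComplex (ModuleCat R) ℤ} (i : W ⟶ Y) : Prop :=
  ∀ n : ℤ, ∃ r : Y.X n →ₗ[R] W.X n, ∀ w : W.X n, r (i.f n w) = w

/-- Degreewise split epimorphism: each `pₙ` admits an `R`-linear section. -/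
def DegSplitEpi {E B : ChainComplex (ModuleCat R) ℤ} (p : E ⟶ B) : Prop :=
  ∀ n : ℤ, ∃ s : B.X n →ₗ[R] E.X n, ∀ b : B.X n, p.f n (s b) = b


/-- The pullback `Qₙ = {(b, z) ∈ Bₙ × Z_{n-1}(E) : d(b) = p(z)}`. -/
def Qsub {E B : ChainComplex (ModuleCat R) ℤ} (p : E ⟶ B) (n : ℤ) :
    Submodule R (B.X n × E.X (n - 1)) where
  carrier := {bz | E.d (n - 1) (n - 1 - 1) bz.2 = 0 ∧ B.d n (n - 1) bz.1 = p.f (n - 1) bz.2}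
  add_mem' := by
    rintro a b ⟨ha1, ha2⟩ ⟨hb1, hb2⟩
    constructor <;> simp_all [Prod.fst_add, Prod.snd_add, map_add]
  zero_mem' := by constructor <;> simp
  smul_mem' := by
    rintro c a ⟨ha1, ha2⟩
    constructor <;> simp_all [Prod.smul_fst, Prod.smul_snd, map_smul]

section Aux

variable {R}

/-- Cast between propositionally equal degrees of a complex. -/
def cstm (X : ChainComplex (ModuleCat R) ℤ) {m n : ℤ} (h : m = n) : X.X m ⟶ X.X n :=
  eqToHom (congrArg X.X h)

variable {X Y : ChainComplex (ModuleCat R) ℤ}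

lemma cstm_self {n : ℤ} (h : n = n) (x : X.X n) : cstm X h x = x := rfl

lemma cstm_d {m n : ℤ} (h : m = n) (k : ℤ) (x : X.X m) :
    X.d n k (cstm X h x) = X.d m k x := by subst h; rfl

lemma d_cstm {m n : ℤ} (h : m = n) (k : ℤ) (x : X.X k) :
    cstm X h (X.d k m x) = X.d k n x := by subst h; rfl

lemma f_cstm (f : X ⟶ Y) {m n : ℤ} (h : m = n) (x : X.X m) :
    f.f n (cstm X h x) = cstm Y h (f.f m x) := by subst h; rfl

lemma cstm_cstm {m n k : ℤ} (h1 : m = n) (h2 : n = k) (x : X.X m) :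
    cstm X h2 (cstm X h1 x) = cstm X (h1.trans h2) x := by subst h1; subst h2; rfl

lemma d_d (n m k : ℤ) (x : X.X n) : X.d m k (X.d n m x) = 0 := by
  calc X.d m k (X.d n m x) = (X.d n m ≫ X.d m k) x := rfl
    _ = 0 := by rw [X.d_comp_d n m k]; rfl

lemma f_comm (f : X ⟶ Y) (i j : ℤ) (x : X.X i) :
    f.f j (X.d i j x) = Y.d i j (f.f i x) := by
  calc f.f j (X.d i j x) = (X.d i j ≫ f.f j) x := rfl
    _ = (f.f i ≫ Y.d i j) x := by rw [f.comm i j]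
    _ = _ := rfl

lemma isHomotopy_apply {u v : X ⟶ Y} {s} (hs : IsHomotopy R u v s) (n : ℤ) (x : X.X n) :
    Y.d (n + 1) n (s n x) +
      cstm Y (show n - 1 + 1 = n by omega) (s (n - 1) (X.d n (n - 1) x)) =
    u.f n x - v.f n x :=
  LinearMap.congr_fun (congrArg ModuleCat.Hom.hom (hs n)) x

end Aux

section Fwd

variable {R}
variable {E B : ChainComplex (ModuleCat R) ℤ} (p : E ⟶ B)
variable (η : ∀ n : ℤ, Qsub R p n →ₗ[R] E.X n)
variable (hη : ∀ (n : ℤ) (q : Qsub R p n),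
    p.f n (η n q) = (q : B.X n × E.X (n - 1)).1 ∧
      E.d n (n - 1) (η n q) = (q : B.X n × E.X (n - 1)).2)

/-- `b ↦ (d b, 0) ∈ Q_{n-1}`. -/
def fq0 (n : ℤ) : B.X n →ₗ[R] Qsub R p (n - 1) :=
  LinearMap.codRestrict _
    (LinearMap.prod ((B.d n (n - 1)).hom : B.X n →ₗ[R] B.X (n - 1)) 0)
    (fun b => ⟨by simp, by simpa using (d_d n (n - 1) (n - 1 - 1) b)⟩)

def fz0 (n : ℤ) : B.X n →ₗ[R] E.X (n - 1) := (η (n - 1)).comp (fq0 p n)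

include hη

lemma fz0_p (n : ℤ) (b : B.X n) : p.f (n - 1) (fz0 p η n b) = B.d n (n - 1) b :=
  (hη (n - 1) (fq0 p n b)).1

lemma fz0_dzero (n : ℤ) (b : B.X n) :
    E.d (n - 1) (n - 1 - 1) (fz0 p η n b) = 0 :=
  (hη (n - 1) (fq0 p n b)).2

lemma fz0_d (n : ℤ) (b : B.X n) : fz0 p η (n - 1) (B.d n (n - 1) b) = 0 := by
  have h0 : fq0 p (n - 1) (B.d n (n - 1) b) = 0 := by
    apply Subtype.ext
    show (B.d (n - 1) (n - 1 - 1) (B.d n (n - 1) b), (0 : E.X (n - 1 - 1 - 1))) = (0, 0)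
    rw [d_d]
  show η (n - 1 - 1) (fq0 p (n - 1) (B.d n (n - 1) b)) = 0
  rw [h0, map_zero]

def fq1 (n : ℤ) : B.X n →ₗ[R] Qsub R p n :=
  LinearMap.codRestrict _ (LinearMap.prod LinearMap.id (fz0 p η n))
    (fun b => ⟨fz0_dzero p η hη n b, (fz0_p p η hη n b).symm⟩)

def fG (n : ℤ) : B.X n →ₗ[R] E.X n := (η n).comp (fq1 p η hη n)

lemma fG_p (n : ℤ) (b : B.X n) : p.f n (fG p η hη n b) = b :=
  (hη n (fq1 p η hη n b)).1

lemma fG_d (n : ℤ) (b : B.X n) :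
    E.d n (n - 1) (fG p η hη n b) = fz0 p η n b :=
  (hη n (fq1 p η hη n b)).2

lemma fG_chain (n : ℤ) (b : B.X n) :
    E.d n (n - 1) (fG p η hη n b) = fG p η hη (n - 1) (B.d n (n - 1) b) := by
  rw [fG_d]
  show η (n - 1) (fq0 p n b) = η (n - 1) (fq1 p η hη (n - 1) (B.d n (n - 1) b))
  congr 1
  apply Subtype.ext
  show (B.d n (n - 1) b, (0 : E.X (n - 1 - 1)))
    = (B.d n (n - 1) b, fz0 p η (n - 1) (B.d n (n - 1) b))
  rw [fz0_d p η hη n b]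

lemma fG_cast {m n : ℤ} (h : m = n) (b : B.X m) :
    fG p η hη n (cstm B h b) = cstm E h (fG p η hη m b) := by subst h; rfl

/-- The chain-map section of `p`. -/
def fg : B ⟶ E where
  f n := ModuleCat.ofHom (fG p η hη n : B.X n →ₗ[R] E.X n)
  comm' i j hij := by
    refine ModuleCat.hom_ext (LinearMap.ext fun b => ?_)
    have hij' : j + 1 = i := hij
    have h : i - 1 = j := by omega
    show E.d i j (fG p η hη i b) = fG p η hη j (B.d i j b)
    calc E.d i j (fG p η hη i b)
        = cstm E h (E.d i (i - 1) (fG p η hη i b)) := (d_cstm h i _).symm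
      _ = cstm E h (fG p η hη (i - 1) (B.d i (i - 1) b)) := by rw [fG_chain]
      _ = fG p η hη j (cstm B h (B.d i (i - 1) b)) := (fG_cast p η hη h _).symm
      _ = fG p η hη j (B.d i j b) := by rw [d_cstm]

lemma fg_p : fg p η hη ≫ p = 𝟙 B := by
  ext n b : 3
  exact fG_p p η hη n b


def fh (n : ℤ) : E.X n →ₗ[R] E.X n :=
  LinearMap.id - (fG p η hη n).comp ((p.f n).hom : E.X n →ₗ[R] B.X n)

lemma fh_p (n : ℤ) (e : E.X n) : p.f n (fh p η hη n e) = 0 := by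
  show p.f n (e - fG p η hη n (p.f n e)) = 0
  rw [map_sub, fG_p, sub_self]

lemma fh_chain (n : ℤ) (e : E.X n) :
    E.d n (n - 1) (fh p η hη n e) = fh p η hη (n - 1) (E.d n (n - 1) e) := by
  show E.d n (n - 1) (e - fG p η hη n (p.f n e))
    = E.d n (n - 1) e - fG p η hη (n - 1) (p.f (n - 1) (E.d n (n - 1) e))
  rw [map_sub, fG_chain, f_comm p]

/-- `k e = d (h e)`. -/
def fk (n : ℤ) : E.X n →ₗ[R] E.X (n - 1) :=
  ((E.d n (n - 1)).hom : E.X n →ₗ[R] E.X (n - 1)).comp (fh p η hη n)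

lemma fk_p (n : ℤ) (e : E.X n) : p.f (n - 1) (fk p η hη n e) = 0 := by
  show p.f (n - 1) (E.d n (n - 1) (fh p η hη n e)) = 0
  rw [f_comm p, fh_p, map_zero]

def fqA (n : ℤ) : E.X n →ₗ[R] Qsub R p n :=
  LinearMap.codRestrict _ (LinearMap.prod 0 (fk p η hη n))
    (fun e => ⟨d_d n (n - 1) (n - 1 - 1) _, by
      show B.d n (n - 1) 0 = p.f (n - 1) (fk p η hη n e)
      rw [map_zero, fk_p]⟩)

/-- `σ1 e = σ (d (h e))`. -/
def fσ1 (n : ℤ) : E.X n →ₗ[R] E.X n := (η n).comp (fqA p η hη n)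

lemma fσ1_p (n : ℤ) (e : E.X n) : p.f n (fσ1 p η hη n e) = 0 :=
  (hη n (fqA p η hη n e)).1

lemma fσ1_d (n : ℤ) (e : E.X n) :
    E.d n (n - 1) (fσ1 p η hη n e) = fk p η hη n e :=
  (hη n (fqA p η hη n e)).2

/-- `w e = h e - σ (d (h e))`. -/
def fw (n : ℤ) : E.X n →ₗ[R] E.X n := fh p η hη n - fσ1 p η hη n

lemma fw_p (n : ℤ) (e : E.X n) : p.f n (fw p η hη n e) = 0 := by
  show p.f n (fh p η hη n e - fσ1 p η hη n e) = 0
  rw [map_sub, fh_p, fσ1_p, sub_self]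

lemma fw_d (n : ℤ) (e : E.X n) : E.d n (n - 1) (fw p η hη n e) = 0 := by
  show E.d n (n - 1) (fh p η hη n e - fσ1 p η hη n e) = 0
  rw [map_sub, fσ1_d]
  show fk p η hη n e - fk p η hη n e = 0
  rw [sub_self]

def fqB (n : ℤ) : E.X n →ₗ[R] Qsub R p (n + 1) :=
  LinearMap.codRestrict _
    (LinearMap.prod 0
      (((cstm E (show n = n + 1 - 1 by omega)).hom : E.X n →ₗ[R] E.X (n + 1 - 1)).comp
        (fw p η hη n)))
    (fun e => by
      constructor
      · show E.d (n + 1 - 1) (n + 1 - 1 - 1)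
          (cstm E (show n = n + 1 - 1 by omega) (fw p η hη n e)) = 0
        rw [cstm_d]
        rw [show E.d n (n + 1 - 1 - 1) (fw p η hη n e)
            = cstm E (show n - 1 = n + 1 - 1 - 1 by omega) (E.d n (n - 1) (fw p η hη n e))
          from (d_cstm _ n _).symm]
        rw [fw_d, map_zero]
      · show B.d (n + 1) (n + 1 - 1) 0
          = p.f (n + 1 - 1) (cstm E (show n = n + 1 - 1 by omega) (fw p η hη n e))
        rw [map_zero, f_cstm, fw_p, map_zero])

def fs (n : ℤ) : E.X n →ₗ[R] E.X (n + 1) := -((η (n + 1)).comp (fqB p η hη n))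

omit hη in
/-- Cast between propositionally equal degrees of `Qsub`. -/
def qcast {m n : ℤ} (h : m = n) : Qsub R p m →ₗ[R] Qsub R p n := by
  subst h; exact LinearMap.id

omit hη in
lemma eta_cast {m n : ℤ} (h : m = n) (q : Qsub R p m) :
    η n (qcast p h q) = cstm E h (η m q) := by subst h; rfl

omit hη in
lemma qcast_val {m n : ℤ} (h : m = n) (q : Qsub R p m) :
    (qcast p h q : B.X n × E.X (n - 1))
      = (cstm B h (q : B.X m × E.X (m - 1)).1,
         cstm E (show m - 1 = n - 1 by omega) (q : B.X m × E.X (m - 1)).2) := by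
  subst h; rfl

lemma fk_dzero (n : ℤ) (e : E.X n) :
    fk p η hη (n - 1) (E.d n (n - 1) e) = 0 := by
  show E.d (n - 1) (n - 1 - 1) (fh p η hη (n - 1) (E.d n (n - 1) e)) = 0
  rw [← fh_chain, d_d]

lemma fw_of_d (n : ℤ) (e : E.X n) :
    fw p η hη (n - 1) (E.d n (n - 1) e) = fk p η hη n e := by
  show fh p η hη (n - 1) (E.d n (n - 1) e) - fσ1 p η hη (n - 1) (E.d n (n - 1) e)
    = fk p η hη n e
  have h1 : fqA p η hη (n - 1) (E.d n (n - 1) e) = 0 := by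
    apply Subtype.ext
    show ((0 : B.X (n - 1)), fk p η hη (n - 1) (E.d n (n - 1) e)) = (0, 0)
    rw [fk_dzero]
  have h2 : fσ1 p η hη (n - 1) (E.d n (n - 1) e) = 0 := by
    show η (n - 1) (fqA p η hη (n - 1) (E.d n (n - 1) e)) = 0
    rw [h1, map_zero]
  rw [h2, sub_zero, ← fh_chain]
  rfl

lemma fs_eq (n : ℤ) (e : E.X n) :
    E.d (n + 1) n (fs p η hη n e) +
      cstm E (show n - 1 + 1 = n by omega) (fs p η hη (n - 1) (E.d n (n - 1) e)) =
    fG p η hη n (p.f n e) - e := by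
  have hterm1 : E.d (n + 1) n (fs p η hη n e) = -(fw p η hη n e) := by
    show E.d (n + 1) n (-(η (n + 1) (fqB p η hη n e))) = -(fw p η hη n e)
    rw [map_neg, neg_inj]
    rw [show E.d (n + 1) n (η (n + 1) (fqB p η hη n e))
        = cstm E (show n + 1 - 1 = n by omega)
            (E.d (n + 1) (n + 1 - 1) (η (n + 1) (fqB p η hη n e)))
      from (d_cstm _ (n + 1) _).symm]
    rw [(hη (n + 1) (fqB p η hη n e)).2]
    show cstm E _ (cstm E (show n = n + 1 - 1 by omega) (fw p η hη n e)) = fw p η hη n e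
    rw [cstm_cstm]
    exact cstm_self _ _
  have hterm2 : cstm E (show n - 1 + 1 = n by omega)
      (fs p η hη (n - 1) (E.d n (n - 1) e)) = -(fσ1 p η hη n e) := by
    show cstm E (show n - 1 + 1 = n by omega)
        (-(η (n - 1 + 1) (fqB p η hη (n - 1) (E.d n (n - 1) e)))) = _
    rw [map_neg, neg_inj, ← eta_cast]
    show η n (qcast p _ (fqB p η hη (n - 1) (E.d n (n - 1) e)))
      = η n (fqA p η hη n e)
    congr 1
    apply Subtype.ext
    rw [qcast_val]
    show (cstm B _ (0 : B.X (n - 1 + 1)),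
        cstm E _ (cstm E (show n - 1 = n - 1 + 1 - 1 by omega)
          (fw p η hη (n - 1) (E.d n (n - 1) e))))
      = ((0 : B.X n), fk p η hη n e)
    rw [map_zero, cstm_cstm, cstm_self, fw_of_d]
  rw [hterm1, hterm2]
  show -(fh p η hη n e - fσ1 p η hη n e) + -(fσ1 p η hη n e) = _
  show _ = fG p η hη n (p.f n e) - e
  have : fG p η hη n (p.f n e) - e = -(fh p η hη n e) := by
    show _ = -(e - fG p η hη n (p.f n e))
    rw [neg_sub]
  rw [this]
  abel

lemma fwd_homotopic : Homotopic R (p ≫ fg p η hη) (𝟙 E) := by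
  refine ⟨fun n => ModuleCat.ofHom (fs p η hη n : E.X n →ₗ[R] E.X (n + 1)), fun n => ?_⟩
  refine ModuleCat.hom_ext (LinearMap.ext fun e => ?_)
  exact fs_eq p η hη n e


lemma fwd_homotopic' : Homotopic R (fg p η hη ≫ p) (𝟙 B) := by
  refine ⟨fun n => 0, fun n => ?_⟩
  rw [fg_p]
  simp

end Fwd

section Bwd

variable {R}
variable {E B : ChainComplex (ModuleCat R) ℤ} (p : E ⟶ B)
  (t : ∀ n : ℤ, B.X n →ₗ[R] E.X n)
  (g : B ⟶ E) (s : ∀ n : ℤ, E.X n ⟶ E.X (n + 1)) (s' : ∀ n : ℤ, B.X n ⟶ B.X (n + 1))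

/-- `c = d ∘ t ∘ s' + t ∘ s' ∘ d`. -/
def bc (n : ℤ) : B.X n →ₗ[R] E.X n :=
  ((E.d (n + 1) n).hom : E.X (n + 1) →ₗ[R] E.X n).comp
      ((t (n + 1)).comp ((s' n).hom : B.X n →ₗ[R] B.X (n + 1))) +
    ((cstm E (show n - 1 + 1 = n by omega)).hom : E.X (n - 1 + 1) →ₗ[R] E.X n).comp
      ((t (n - 1 + 1)).comp
        (((s' (n - 1)).hom : B.X (n - 1) →ₗ[R] B.X (n - 1 + 1)).comp
          ((B.d n (n - 1)).hom : B.X n →ₗ[R] B.X (n - 1))))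

lemma bc_apply (n : ℤ) (b : B.X n) :
    bc t s' n b = E.d (n + 1) n (t (n + 1) (s' n b)) +
      cstm E (show n - 1 + 1 = n by omega) (t (n - 1 + 1) (s' (n - 1) (B.d n (n - 1) b))) :=
  rfl

/-- The corrected chain-map section `G = g - c`. -/
def bG (n : ℤ) : B.X n →ₗ[R] E.X n := ((g.f n).hom : B.X n →ₗ[R] E.X n) - bc t s' n

variable (ht : ∀ (n : ℤ) (b : B.X n), p.f n (t n b) = b)
variable (hs : IsHomotopy R (p ≫ g) (𝟙 E) s) (hs' : IsHomotopy R (g ≫ p) (𝟙 B) s')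

include ht hs' in
lemma bG_p (n : ℤ) (b : B.X n) : p.f n (bG t g s' n b) = b := by
  show p.f n (g.f n b - bc t s' n b) = b
  rw [map_sub, bc_apply, map_add]
  rw [show p.f n (E.d (n + 1) n (t (n + 1) (s' n b)))
      = B.d (n + 1) n (p.f (n + 1) (t (n + 1) (s' n b))) from f_comm p _ _ _]
  rw [ht, f_cstm, ht]
  have h := isHomotopy_apply hs' n b
  rw [show ((𝟙 B : B ⟶ B).f n) b = b from rfl] at h
  rw [show ((g ≫ p).f n) b = p.f n (g.f n b) from rfl] at h
  rw [h]
  abel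

lemma bc_chain (n : ℤ) (b : B.X n) :
    E.d n (n - 1) (bc t s' n b) = bc t s' (n - 1) (B.d n (n - 1) b) := by
  rw [bc_apply, bc_apply, map_add, d_d]
  rw [show E.d n (n - 1) (cstm E (show n - 1 + 1 = n by omega)
        (t (n - 1 + 1) (s' (n - 1) (B.d n (n - 1) b))))
      = E.d (n - 1 + 1) (n - 1) (t (n - 1 + 1) (s' (n - 1) (B.d n (n - 1) b)))
    from cstm_d _ _ _]
  rw [d_d, map_zero, map_zero, map_zero]
  abel

lemma bG_chain (n : ℤ) (b : B.X n) :
    E.d n (n - 1) (bG t g s' n b) = bG t g s' (n - 1) (B.d n (n - 1) b) := by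
  show E.d n (n - 1) (g.f n b - bc t s' n b)
    = g.f (n - 1) (B.d n (n - 1) b) - bc t s' (n - 1) (B.d n (n - 1) b)
  rw [map_sub, bc_chain, f_comm g]

/-- `S = s - t ∘ s' ∘ p`. -/
def bS (n : ℤ) : E.X n →ₗ[R] E.X (n + 1) :=
  ((s n).hom : E.X n →ₗ[R] E.X (n + 1)) -
    (t (n + 1)).comp (((s' n).hom : B.X n →ₗ[R] B.X (n + 1)).comp ((p.f n).hom : E.X n →ₗ[R] B.X n))

include hs in
lemma bS_eq (n : ℤ) (x : E.X n) :
    E.d (n + 1) n (bS p t s s' n x) +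
      cstm E (show n - 1 + 1 = n by omega) (bS p t s s' (n - 1) (E.d n (n - 1) x)) =
    bG t g s' n (p.f n x) - x := by
  have h := isHomotopy_apply hs n x
  rw [show ((𝟙 E : E ⟶ E).f n) x = x from rfl] at h
  rw [show ((p ≫ g).f n) x = g.f n (p.f n x) from rfl] at h
  show E.d (n + 1) n (s n x - t (n + 1) (s' n (p.f n x))) +
      cstm E _ (s (n - 1) (E.d n (n - 1) x)
        - t (n - 1 + 1) (s' (n - 1) (p.f (n - 1) (E.d n (n - 1) x)))) = _
  rw [map_sub, map_sub, f_comm p]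
  show _ = g.f n (p.f n x) - bc t s' n (p.f n x) - x
  rw [bc_apply]
  have hg : g.f n (p.f n x) = E.d (n + 1) n (s n x) +
      cstm E (show n - 1 + 1 = n by omega) (s (n - 1) (E.d n (n - 1) x)) + x := by
    rw [h]; abel
  rw [hg]
  abel

/-- The retraction `r = 1 - G ∘ p` onto the kernel. -/
def br (n : ℤ) : E.X n →ₗ[R] E.X n :=
  LinearMap.id - (bG t g s' n).comp ((p.f n).hom : E.X n →ₗ[R] B.X n)

include ht hs' in
lemma br_p (n : ℤ) (x : E.X n) : p.f n (br p t g s' n x) = 0 := by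
  show p.f n (x - bG t g s' n (p.f n x)) = 0
  rw [map_sub, bG_p p t g s' ht hs', sub_self]

lemma br_chain (n : ℤ) (x : E.X n) :
    E.d n (n - 1) (br p t g s' n x) = br p t g s' (n - 1) (E.d n (n - 1) x) := by
  show E.d n (n - 1) (x - bG t g s' n (p.f n x))
    = E.d n (n - 1) x - bG t g s' (n - 1) (p.f (n - 1) (E.d n (n - 1) x))
  rw [map_sub, bG_chain, f_comm p]

/-- The lifting map `η`. -/
def bη (n : ℤ) : Qsub R p n →ₗ[R] E.X n :=
  letI pr1 : Qsub R p n →ₗ[R] B.X n :=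
    (LinearMap.fst R (B.X n) (E.X (n - 1))).comp (Qsub R p n).subtype
  letI pr2 : Qsub R p n →ₗ[R] E.X (n - 1) :=
    (LinearMap.snd R (B.X n) (E.X (n - 1))).comp (Qsub R p n).subtype
  letI k : Qsub R p n →ₗ[R] E.X (n - 1) :=
    (((E.d n (n - 1)).hom : E.X n →ₗ[R] E.X (n - 1)).comp ((bG t g s' n).comp pr1)) - pr2
  (bG t g s' n).comp pr1 +
    (br p t g s' n).comp
      (((cstm E (show n - 1 + 1 = n by omega)).hom : E.X (n - 1 + 1) →ₗ[R] E.X n).comp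
        ((bS p t s s' (n - 1)).comp k))

include ht hs hs' in
lemma bη_spec (n : ℤ) (q : Qsub R p n) :
    p.f n (bη p t g s s' n q) = (q : B.X n × E.X (n - 1)).1 ∧
      E.d n (n - 1) (bη p t g s s' n q) = (q : B.X n × E.X (n - 1)).2 := by
  obtain ⟨⟨b, z⟩, hq1, hq2⟩ := q
  have hpk : p.f (n - 1) (E.d n (n - 1) (bG t g s' n b) - z) = 0 := by
    rw [map_sub, f_comm p, bG_p p t g s' ht hs', ← hq2, sub_self]
  have hdk : E.d (n - 1) (n - 1 - 1) (E.d n (n - 1) (bG t g s' n b) - z) = 0 := by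
    rw [map_sub, d_d, hq1, sub_self]
  have hval : bη p t g s s' n ⟨(b, z), hq1, hq2⟩ = bG t g s' n b +
      br p t g s' n (cstm E (show n - 1 + 1 = n by omega)
        (bS p t s s' (n - 1) (E.d n (n - 1) (bG t g s' n b) - z))) := rfl
  have hdy : E.d n (n - 1) (cstm E (show n - 1 + 1 = n by omega)
      (bS p t s s' (n - 1) (E.d n (n - 1) (bG t g s' n b) - z)))
      = -(E.d n (n - 1) (bG t g s' n b) - z) := by
    rw [show E.d n (n - 1) (cstm E (show n - 1 + 1 = n by omega)
          (bS p t s s' (n - 1) (E.d n (n - 1) (bG t g s' n b) - z)))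
        = E.d (n - 1 + 1) (n - 1)
            (bS p t s s' (n - 1) (E.d n (n - 1) (bG t g s' n b) - z)) from cstm_d _ _ _]
    have h := bS_eq p t g s s' hs (n - 1) (E.d n (n - 1) (bG t g s' n b) - z)
    rw [hdk, map_zero, map_zero, add_zero, hpk, map_zero, zero_sub] at h
    exact h
  constructor
  · show p.f n (bη p t g s s' n ⟨(b, z), hq1, hq2⟩) = b
    rw [hval, map_add, bG_p p t g s' ht hs', br_p p t g s' ht hs', add_zero]
  · show E.d n (n - 1) (bη p t g s s' n ⟨(b, z), hq1, hq2⟩) = z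
    rw [hval, map_add, br_chain, hdy, map_neg]
    show E.d n (n - 1) (bG t g s' n b) +
        -(E.d n (n - 1) (bG t g s' n b) - z -
          bG t g s' (n - 1) (p.f (n - 1) (E.d n (n - 1) (bG t g s' n b) - z))) = z
    rw [hpk, map_zero]
    abel

end Bwd

/-- There are `R`-linear maps `ηₙ : Qₙ → Eₙ` with `p ∘ ηₙ = pr₁` and `d ∘ ηₙ = pr₂` iff `p` is
a degreewise split epimorphism and a homotopy equivalence. -/
theorem statement7 (R : Type) [CommRing R] {E B : ChainComplex (ModuleCat R) ℤ} (p : E ⟶ B) :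
    (∃ η : ∀ n : ℤ, Qsub R p n →ₗ[R] E.X n,
      ∀ (n : ℤ) (q : Qsub R p n),
        p.f n (η n q) = (q : B.X n × E.X (n - 1)).1 ∧
          E.d n (n - 1) (η n q) = (q : B.X n × E.X (n - 1)).2) ↔
    (DegSplitEpi R p ∧ IsHtpyEquiv R p) := by
  constructor
  · rintro ⟨η, hη⟩
    exact ⟨fun n => ⟨fG p η hη n, fG_p p η hη n⟩,
      fg p η hη, fwd_homotopic p η hη, fwd_homotopic' p η hη⟩
  · rintro ⟨hsplit, g, ⟨s, hs⟩, ⟨s', hs'⟩⟩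
    choose t ht using hsplit
    exact ⟨fun n => bη p t g s s' n, bη_spec p t g s s' ht hs hs'⟩
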